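/- Convertibility: Let M ∈ 𝔐(m). For every b ∈ S₊ and every pair of distinct commodities i ≠ j, there exists an offer a ∈ S_P such that ν(a,b) is an īj-vector, i.e. ν(a,b) = −s·e_i + t·e_j for some reals s,t > 0 (all other components zero). -/

import Mathlib

open Finset

/-- `v` and `w` have the same componentwise sign pattern `(+,−,0)`, i.e. `v ∈ ⟨w⟩`. -/
def SameSign {m : ℕ} (v w : Fin m → ℝ) : Prop :=
  ∀ i, (0 < v i ↔ 0 < w i) ∧ (v i < 0 ↔ w i < 0)

/-- An (abstract) exchange mechanism on the commodity set `{1,…,m}` (modelled as `Fin m`):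
a finite index set `K = K₁ ⊔ ⋯ ⊔ K_m` (an index `h` belongs to `K_i` iff `ind h = i`),
together with, for every number `n` of traders, a return map `rho n`. -/
structure ExchangeMechanism (m : ℕ) where
  K : Type
  fintypeK : Fintype K
  decEqK : DecidableEq K
  ind : K → Fin m
  rho : (n : ℕ) → (Fin n → K → ℝ) → Fin n → Fin m → ℝ

namespace ExchangeMechanism

variable {m : ℕ} (M : ExchangeMechanism m)

instance : Fintype M.K := M.fintypeK
instance : DecidableEq M.K := M.decEqK

/-- `a ∈ S = ℝ₊^K`. -/
def Nonneg (a : M.K → ℝ) : Prop := ∀ h, 0 ≤ a h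

/-- `b ∈ S₊ = ℝ₊₊^K`. -/
def Pos (b : M.K → ℝ) : Prop := ∀ h, 0 < b h

/-- `(a¹,…,aⁿ) ∈ S(n)`: an admissible tuple of offers (nonnegative, positive in aggregate). -/
def Valid (n : ℕ) (a : Fin n → M.K → ℝ) : Prop :=
  (∀ k, M.Nonneg (a k)) ∧ M.Pos (∑ k, a k)

/-- The aggregate `ā ∈ C = ℝ₊^m` of an offer `a`, `ā_i = Σ_{h ∈ K_i} a_h`. -/
def agg (a : M.K → ℝ) : Fin m → ℝ :=
  fun i => ∑ h ∈ Finset.univ.filter (fun h => M.ind h = i), a h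

/-- Conservation of commodities: everything received is redistributed. -/
def Conserves : Prop :=
  ∀ n (a : Fin n → M.K → ℝ), M.Valid n a →
    ∑ k, M.rho n a k = ∑ k, M.agg (a k)

/-- Anonymity. -/
def Anonymous : Prop :=
  ∀ n (a : Fin n → M.K → ℝ) (σ : Equiv.Perm (Fin n)), M.Valid n a →
    M.rho n (a ∘ σ) = (M.rho n a) ∘ σ

/-- Aggregation: merging the last two offers merges the last two returns. -/
def Aggregative : Prop :=
  ∀ n (a : Fin (n + 2) → M.K → ℝ), M.Valid (n + 2) a →
    M.rho (n + 1)
      (Fin.snoc (fun k : Fin n => a k.castSucc.castSucc)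
        (a (Fin.castSucc (Fin.last n)) + a (Fin.last (n + 1)))) =
      Fin.snoc (fun k : Fin n => M.rho (n + 2) a k.castSucc.castSucc)
        (M.rho (n + 2) a (Fin.castSucc (Fin.last n)) + M.rho (n + 2) a (Fin.last (n + 1)))

/-- The scaling action `(λ ∗ a)_h = λ_{i} a_h` for `h ∈ K_i` on offers. -/
def scaleS (lam : Fin m → ℝ) (a : M.K → ℝ) : M.K → ℝ := fun h => lam (M.ind h) * a h

/-- Invariance under change of units. -/
def Invariant : Prop :=
  ∀ n (a : Fin n → M.K → ℝ) (lam : Fin m → ℝ), (∀ i, 0 < lam i) → M.Valid n a →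
    M.rho n (fun k => M.scaleS lam (a k)) = fun k i => lam i * M.rho n a k i

/-- Non-dissipation: each net return `rᵏ − āᵏ` is `0` or has a strictly positive component. -/
def NonDissipative : Prop :=
  ∀ n (a : Fin n → M.K → ℝ), M.Valid n a → ∀ k,
    M.rho n a k = M.agg (a k) ∨ ∃ i, M.agg (a k) i < M.rho n a k i

/-- The two-trader return `ρ(a, b)`: the first component of `ρ²`. -/
def ret (a b : M.K → ℝ) : Fin m → ℝ := M.rho 2 ![a, b] 0

/-- The unit offer `e_h`. -/
def unit (h : M.K) : M.K → ℝ := Pi.single h 1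

/-- `h ∈ K_i` is an `ij`-index: some offer of the others yields a positive return of `j`. -/
def IsIJIndex (i j : Fin m) (h : M.K) : Prop :=
  M.ind h = i ∧ ∃ a, M.Valid 2 ![M.unit h, a] ∧ 0 < M.ret (M.unit h) a j

/-- A pure `ij`-index: the return to `e_h` is always exclusively in commodity `j`. -/
def IsPureIJIndex (i j : Fin m) (h : M.K) : Prop :=
  M.IsIJIndex i j h ∧
    ∀ a, M.Valid 2 ![M.unit h, a] → ∀ k, k ≠ j → M.ret (M.unit h) a k = 0

/-- Flexibility: whenever there is an `ij`-index there is a pure `ij`-index. -/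
def Flexible : Prop :=
  ∀ i j : Fin m, (∃ h, M.IsIJIndex i j h) → ∃ h, M.IsPureIJIndex i j h

/-- The trade function `r(a,b) = ρ(a, b − a)` (for `a ≤ b`, `b ∈ S₊`). -/
def trade (a b : M.K → ℝ) : Fin m → ℝ := M.ret a (b - a)

/-- The net-trade function `ν(a,b) = r(a,b) − ā` (for `a ≤ b`, `b ∈ S₊`). -/
def nu (a b : M.K → ℝ) : Fin m → ℝ := M.trade a b - M.agg a

/-- `nu'` is an extension of the net-trade function `ν` to all of `S × S₊` which is
homogeneous of degree 1 in the offer and of degree 0 in the market state. -/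
def IsNuExtension (nu' : (M.K → ℝ) → (M.K → ℝ) → Fin m → ℝ) : Prop :=
  (∀ a b, M.Nonneg a → M.Pos b → a ≤ b → nu' a b = M.nu a b) ∧
  (∀ a b (t : ℝ), M.Nonneg a → M.Pos b → 0 < t → nu' (t • a) b = t • nu' a b) ∧
  (∀ a b (t : ℝ), M.Nonneg a → M.Pos b → 0 < t → nu' a (t • b) = nu' a b)


/-- `v → w`: the bundle `v` can be converted to `w` (relative to the extended
net-trade function `nu'`). -/
def Converts (nu' : (M.K → ℝ) → (M.K → ℝ) → Fin m → ℝ) (v w : Fin m → ℝ) : Prop :=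
  ∃ a b, M.Nonneg a ∧ M.Pos b ∧ M.agg a ≤ v ∧ w = v + nu' a b

/-- `v` can be converted to `w` in exactly `t` steps. -/
def ConvertsIn (nu' : (M.K → ℝ) → (M.K → ℝ) → Fin m → ℝ) (t : ℕ)
    (v w : Fin m → ℝ) : Prop :=
  ∃ f : Fin (t + 1) → Fin m → ℝ, f 0 = v ∧ f (Fin.last t) = w ∧
    ∀ k : Fin t, M.Converts nu' (f k.castSucc) (f k.succ)

/-- Connectedness: each `e_i` converts to each `e_j` in finitely many steps,
i.e. `τ(M) < ∞`. -/
def Connected (nu' : (M.K → ℝ) → (M.K → ℝ) → Fin m → ℝ) : Prop :=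
  ∀ i j : Fin m, i ≠ j →
    ∃ t : ℕ, M.ConvertsIn nu' t (Pi.single i 1) (Pi.single j 1)

/-- `M ∈ 𝔐(m)` (relative to a chosen extension `nu'` of its net-trade function):
`M` is connected and satisfies Anonymity, Aggregation, Invariance, Non-dissipation
and Flexibility. -/
def MemM (nu' : (M.K → ℝ) → (M.K → ℝ) → Fin m → ℝ) : Prop :=
  M.Conserves ∧ M.Anonymous ∧ M.Aggregative ∧ M.Invariant ∧ M.NonDissipative ∧
    M.Flexible ∧ M.IsNuExtension nu' ∧ M.Connected nu'


/-- `P ⊆ K` contains exactly one pure `ij`-index for each ordered pair `(i,j)` for which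
`M` has a pure `ij`-index, and nothing else. -/
def IsPureSelection (P : Set M.K) : Prop :=
  (∀ h ∈ P, ∃ i j, M.IsPureIJIndex i j h) ∧
    ∀ i j : Fin m, (∃ h, M.IsPureIJIndex i j h) →
      ∃! h, h ∈ P ∧ M.IsPureIJIndex i j h

/-- `a ∈ S_P`: a nonnegative offer supported on `P`. -/
def SPoffer (P : Set M.K) (a : M.K → ℝ) : Prop :=
  M.Nonneg a ∧ ∀ h ∉ P, a h = 0

/-- `a ∈ S_P(v)`: a `P`-offer subordinate to `v`. -/
def SPofferLe (P : Set M.K) (v : Fin m → ℝ) (a : M.K → ℝ) : Prop :=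
  M.SPoffer P a ∧ M.agg a ≤ v

end ExchangeMechanism

/-! ### Auxiliary lemmas -/

lemma aux_snoc_one {α : Type*} (x : Fin 1 → α) (y : α) :
    (Fin.snoc x y : Fin 2 → α) = ![x 0, y] := by
  funext i
  fin_cases i
  · exact Fin.snoc_castSucc _ _ 0
  · exact Fin.snoc_last _ _

lemma aux_exists_scale {K : Type*} [Fintype K] (a b : K → ℝ) (hb : ∀ h, 0 < b h) :
    ∃ T : ℝ, 0 < T ∧ ∀ h, a h ≤ T * b h := by
  obtain ⟨Q, hQ⟩ := Finset.exists_le (Finset.image (fun h : K => a h / b h) Finset.univ)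
  refine ⟨max Q 1, lt_of_lt_of_le one_pos (le_max_right _ _), fun h => ?_⟩
  have h1 : a h / b h ≤ Q := hQ _ (Finset.mem_image_of_mem _ (Finset.mem_univ h))
  calc a h = (a h / b h) * b h := by rw [div_mul_cancel₀]; exact ne_of_gt (hb h)
    _ ≤ max Q 1 * b h :=
        mul_le_mul_of_nonneg_right (le_trans h1 (le_max_left _ _)) (le_of_lt (hb h))

namespace ExchangeMechanism

variable {m : ℕ} (M : ExchangeMechanism m)

lemma valid_two {a b : M.K → ℝ} (ha : M.Nonneg a) (hb : M.Nonneg b)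
    (hs : M.Pos (a + b)) : M.Valid 2 ![a, b] := by
  refine ⟨fun k => ?_, ?_⟩
  · fin_cases k <;> assumption
  · have : (∑ k : Fin 2, ![a, b] k) = a + b := by
      rw [Fin.sum_univ_two]; rfl
    rw [this]; exact hs

lemma valid_three {a b c : M.K → ℝ} (ha : M.Nonneg a) (hb : M.Nonneg b) (hc : M.Nonneg c)
    (hs : M.Pos (a + b + c)) : M.Valid 3 ![a, b, c] := by
  refine ⟨fun k => ?_, ?_⟩
  · fin_cases k <;> assumption
  · have : (∑ k : Fin 3, ![a, b, c] k) = a + b + c := by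
      rw [Fin.sum_univ_three]; rfl
    rw [this]; exact hs

/-- Two-trader symmetry from anonymity. -/
lemma ret_swap (hA : M.Anonymous) {a b : M.K → ℝ} (h : M.Valid 2 ![a, b]) :
    M.rho 2 ![b, a] 0 = M.rho 2 ![a, b] 1 := by
  have := hA 2 ![a, b] (Equiv.swap 0 1) h
  have hcomp : (![a, b] ∘ (Equiv.swap (0 : Fin 2) 1)) = ![b, a] := by
    funext i; fin_cases i <;> rfl
  rw [hcomp] at this
  have h2 := congrFun this 0
  simpa using h2

lemma rho3_perm1 (hA : M.Anonymous) {c a1 a2 : M.K → ℝ} (h : M.Valid 3 ![a1, c, a2]) :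
    M.rho 3 ![c, a1, a2] 1 = M.rho 3 ![a1, c, a2] 0 := by
  have := hA 3 ![a1, c, a2] (Equiv.swap 0 1) h
  have hcomp : (![a1, c, a2] ∘ (Equiv.swap (0 : Fin 3) 1)) = ![c, a1, a2] := by
    funext i; fin_cases i <;> rfl
  rw [hcomp] at this
  have h2 := congrFun this 1
  simpa using h2

lemma rho3_perm2 (hA : M.Anonymous) {c a1 a2 : M.K → ℝ} (h : M.Valid 3 ![a2, c, a1]) :
    M.rho 3 ![c, a1, a2] 2 = M.rho 3 ![a2, c, a1] 0 := by
  have := hA 3 ![a2, c, a1] ⟨![1, 2, 0], ![2, 0, 1], by decide, by decide⟩ h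
  have hcomp : (![a2, c, a1] ∘ (⟨![1, 2, 0], ![2, 0, 1], by decide, by decide⟩ :
      Equiv.Perm (Fin 3))) = ![c, a1, a2] := by
    funext i; fin_cases i <;> rfl
  rw [hcomp] at this
  have h2 := congrFun this 2
  simpa using h2

lemma agg_three (hAg : M.Aggregative) {x y z : M.K → ℝ} (h : M.Valid 3 ![x, y, z]) :
    M.rho 2 ![x, y + z] 0 = M.rho 3 ![x, y, z] 0 ∧
      M.rho 2 ![x, y + z] 1 = M.rho 3 ![x, y, z] 1 + M.rho 3 ![x, y, z] 2 := by
  have key := hAg 1 ![x, y, z] h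
  have hl : (Fin.snoc (fun k : Fin 1 => ![x, y, z] k.castSucc.castSucc)
      (![x, y, z] (Fin.castSucc (Fin.last 1)) + ![x, y, z] (Fin.last 2)) : Fin 2 → M.K → ℝ)
      = ![x, y + z] := by
    rw [aux_snoc_one]; rfl
  have hr : (Fin.snoc (fun k : Fin 1 => M.rho 3 ![x, y, z] k.castSucc.castSucc)
      (M.rho 3 ![x, y, z] (Fin.castSucc (Fin.last 1)) + M.rho 3 ![x, y, z] (Fin.last 2))
      : Fin 2 → Fin m → ℝ)
      = ![M.rho 3 ![x, y, z] 0, M.rho 3 ![x, y, z] 1 + M.rho 3 ![x, y, z] 2] := by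
    rw [aux_snoc_one]; rfl
  rw [hl, hr] at key
  exact ⟨congrFun key 0, congrFun key 1⟩


lemma ret_add (hA : M.Anonymous) (hAg : M.Aggregative) {a1 a2 c : M.K → ℝ}
    (h1 : M.Nonneg a1) (h2 : M.Nonneg a2) (hc : M.Nonneg c)
    (hpos : M.Pos (a1 + a2 + c)) :
    M.ret (a1 + a2) c = M.ret a1 (c + a2) + M.ret a2 (c + a1) := by
  have pos1 : M.Pos (c + a1 + a2) := fun h => by
    have := hpos h; simp only [Pi.add_apply] at *; linarith
  have pos2 : M.Pos (a1 + c + a2) := fun h => by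
    have := hpos h; simp only [Pi.add_apply] at *; linarith
  have pos3 : M.Pos (a2 + c + a1) := fun h => by
    have := hpos h; simp only [Pi.add_apply] at *; linarith
  have pos4 : M.Pos (c + (a1 + a2)) := fun h => by
    have := hpos h; simp only [Pi.add_apply] at *; linarith
  have nn12 : M.Nonneg (a1 + a2) := fun h => add_nonneg (h1 h) (h2 h)
  have V1 : M.Valid 3 ![c, a1, a2] := M.valid_three hc h1 h2 pos1
  have V2 : M.Valid 3 ![a1, c, a2] := M.valid_three h1 hc h2 pos2
  have V3 : M.Valid 3 ![a2, c, a1] := M.valid_three h2 hc h1 pos3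
  have Vm : M.Valid 2 ![c, a1 + a2] := M.valid_two hc nn12 pos4
  have e0 : M.ret (a1 + a2) c = M.rho 2 ![c, a1 + a2] 1 := M.ret_swap hA Vm
  have e1 := M.agg_three hAg V1
  have e2 := M.agg_three hAg V2
  have e3 := M.agg_three hAg V3
  have p1 := M.rho3_perm1 hA V2
  have p2 := M.rho3_perm2 hA V3
  show M.ret (a1 + a2) c = M.rho 2 ![a1, c + a2] 0 + M.rho 2 ![a2, c + a1] 0
  rw [e0, e1.2, p1, p2, e2.1, e3.1]

/-- `ν(a,b) = r(a,b) − ā` with explicit market scaling, for `a ≤ T • b`. -/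
lemma nu'_eq_nu (nu' : (M.K → ℝ) → (M.K → ℝ) → Fin m → ℝ) (hext : M.IsNuExtension nu')
    {a b : M.K → ℝ} (ha : M.Nonneg a) (hb : M.Pos b) {T : ℝ} (hT : 0 < T)
    (hle : ∀ h, a h ≤ T * b h) : nu' a b = M.nu a (T • b) := by
  have hposTb : M.Pos (T • b) := fun h => by
    simp only [Pi.smul_apply, smul_eq_mul]; exact mul_pos hT (hb h)
  have h1 : nu' a (T • b) = nu' a b := hext.2.2 a b T ha hb hT
  rw [← h1]
  exact hext.1 a (T • b) ha hposTb (fun h => hle h)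

lemma nu'_zero (nu' : (M.K → ℝ) → (M.K → ℝ) → Fin m → ℝ) (hext : M.IsNuExtension nu')
    {b : M.K → ℝ} (hb : M.Pos b) : nu' 0 b = 0 := by
  have h0 : M.Nonneg (0 : M.K → ℝ) := fun h => le_refl _
  have h2 : nu' ((2:ℝ) • (0 : M.K → ℝ)) b = (2:ℝ) • nu' 0 b := hext.2.1 0 b 2 h0 hb two_pos
  rw [smul_zero] at h2
  have : nu' 0 b = (2:ℝ) • nu' 0 b := h2
  funext i
  have := congrFun this i
  simp only [Pi.smul_apply, smul_eq_mul] at this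
  have : nu' 0 b i = 0 := by linarith
  simpa using this

/-- Additivity of the extended net-trade function in the offer. -/
lemma nu'_add (hA : M.Anonymous) (hAg : M.Aggregative)
    (nu' : (M.K → ℝ) → (M.K → ℝ) → Fin m → ℝ) (hext : M.IsNuExtension nu')
    {a1 a2 b : M.K → ℝ} (h1 : M.Nonneg a1) (h2 : M.Nonneg a2) (hb : M.Pos b) :
    nu' (a1 + a2) b = nu' a1 b + nu' a2 b := by
  obtain ⟨T, hT, hle⟩ := aux_exists_scale (a1 + a2) b hb
  have hle1 : ∀ h, a1 h ≤ T * b h := fun h => by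
    have := hle h; have := h2 h; simp only [Pi.add_apply] at *; linarith
  have hle2 : ∀ h, a2 h ≤ T * b h := fun h => by
    have := hle h; have := h1 h; simp only [Pi.add_apply] at *; linarith
  have nn12 : M.Nonneg (a1 + a2) := fun h => add_nonneg (h1 h) (h2 h)
  have e12 := M.nu'_eq_nu nu' hext nn12 hb hT hle
  have e1 := M.nu'_eq_nu nu' hext h1 hb hT hle1
  have e2 := M.nu'_eq_nu nu' hext h2 hb hT hle2
  rw [e12, e1, e2]
  have hc : M.Nonneg (T • b - (a1 + a2)) := fun h => by
    have := hle h; simp only [Pi.sub_apply, Pi.smul_apply, Pi.add_apply, smul_eq_mul]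
    simp only [Pi.add_apply] at this; linarith
  have hpos : M.Pos (a1 + a2 + (T • b - (a1 + a2))) := fun h => by
    have := mul_pos hT (hb h)
    simp only [Pi.add_apply, Pi.sub_apply, Pi.smul_apply, smul_eq_mul]; linarith
  have key := M.ret_add hA hAg h1 h2 hc hpos
  have c1 : T • b - (a1 + a2) + a2 = T • b - a1 := by funext h; simp; ring
  have c2 : T • b - (a1 + a2) + a1 = T • b - a2 := by funext h; simp; ring
  rw [c1, c2] at key
  have aggadd : M.agg (a1 + a2) = M.agg a1 + M.agg a2 := by
    funext i
    simp only [agg, Pi.add_apply, Finset.sum_add_distrib]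
  funext i
  simp only [nu, trade, Pi.sub_apply, Pi.add_apply]
  rw [aggadd]
  have := congrFun key i
  simp only [Pi.add_apply] at this ⊢
  rw [this]; ring


lemma agg_unit (h : M.K) : M.agg (M.unit h) = Pi.single (M.ind h) 1 := by
  funext i
  simp only [agg, unit]
  rw [Finset.sum_congr rfl (fun h' _ => Pi.single_apply h (1:ℝ) h')]
  rw [Finset.sum_ite_eq' (Finset.univ.filter (fun h' => M.ind h' = i)) h (fun _ => (1:ℝ))]
  by_cases hi : M.ind h = i
  · simp [hi, Pi.single_apply]
  · simp [hi, Pi.single_apply, Ne.symm hi]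

lemma nonneg_unit (h : M.K) : M.Nonneg (M.unit h) := fun h' => by
  simp [unit, Pi.single_apply]; split <;> norm_num

/-- Computation of `nu'` on a unit offer: there is a companion offer `c` such that
`nu' (e_h) b = ret(e_h, c) − e_{ind h}` and `(e_h, c)` is valid. -/
lemma nu'_unit (nu' : (M.K → ℝ) → (M.K → ℝ) → Fin m → ℝ) (hext : M.IsNuExtension nu')
    (h : M.K) {b : M.K → ℝ} (hb : M.Pos b) :
    ∃ c, M.Valid 2 ![M.unit h, c] ∧
      nu' (M.unit h) b = M.ret (M.unit h) c - Pi.single (M.ind h) 1 := by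
  obtain ⟨T, hT, hle⟩ := aux_exists_scale (M.unit h) b (fun h' => hb h')
  refine ⟨T • b - M.unit h, ?_, ?_⟩
  · refine M.valid_two (M.nonneg_unit h) (fun h' => by
      have := hle h'; simp only [Pi.sub_apply, Pi.smul_apply, smul_eq_mul]; linarith) ?_
    have : M.unit h + (T • b - M.unit h) = T • b := by funext h'; simp
    rw [this]
    exact fun h' => by simp only [Pi.smul_apply, smul_eq_mul]; exact mul_pos hT (hb h')
  · rw [M.nu'_eq_nu nu' hext (M.nonneg_unit h) hb hT hle]
    simp only [nu, trade, M.agg_unit h]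

/-- If the return component `l ≠ ind h` of a unit offer is ever positive, `h` is an index. -/
lemma nu'_unit_nonpos (nu' : (M.K → ℝ) → (M.K → ℝ) → Fin m → ℝ) (hext : M.IsNuExtension nu')
    (h : M.K) {b : M.K → ℝ} (hb : M.Pos b) (l : Fin m) (hl : l ≠ M.ind h)
    (hno : ¬ M.IsIJIndex (M.ind h) l h) : nu' (M.unit h) b l ≤ 0 := by
  obtain ⟨c, hV, hEq⟩ := M.nu'_unit nu' hext h hb
  by_contra hpos
  push_neg at hpos
  apply hno
  refine ⟨rfl, c, hV, ?_⟩
  have := congrFun hEq l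
  simp only [Pi.sub_apply] at this
  rw [Pi.single_apply] at this
  rw [if_neg hl] at this
  rw [this] at hpos
  linarith

/-- On a pure `ij`-index, `nu'` is an `īj`-vector with `s = 1`. -/
lemma nu'_pure (hND : M.NonDissipative)
    (nu' : (M.K → ℝ) → (M.K → ℝ) → Fin m → ℝ) (hext : M.IsNuExtension nu')
    {i j : Fin m} (hij : i ≠ j) {h : M.K} (hpure : M.IsPureIJIndex i j h)
    {b : M.K → ℝ} (hb : M.Pos b) :
    ∃ t : ℝ, 0 < t ∧
      nu' (M.unit h) b = -Pi.single i 1 + t • (Pi.single j 1 : Fin m → ℝ) := by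
  obtain ⟨c, hV, hEq⟩ := M.nu'_unit nu' hext h hb
  have hind : M.ind h = i := hpure.1.1
  have hzero : ∀ k, k ≠ j → M.ret (M.unit h) c k = 0 := fun k hk => hpure.2 c hV k hk
  -- non-dissipation for trader 0 in ![unit h, c]
  have hret : M.ret (M.unit h) c = M.rho 2 ![M.unit h, c] 0 := rfl
  have hagg : M.agg (![M.unit h, c] 0) = Pi.single i 1 := by
    show M.agg (M.unit h) = _
    rw [M.agg_unit h, hind]
  have hND2 := hND 2 ![M.unit h, c] hV 0
  rw [hagg] at hND2
  have hj : 0 < M.ret (M.unit h) c j := by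
    rcases hND2 with hcase | ⟨l, hl⟩
    · exfalso
      have hzi := hzero i hij
      have h5 := congrFun hcase i
      rw [← hret] at h5
      rw [hzi] at h5
      simp [Pi.single_apply] at h5
    · have hlj : l = j := by
        by_contra hlj
        rw [← hret] at hl
        rw [hzero l hlj] at hl
        rw [Pi.single_apply] at hl
        split at hl <;> linarith
      rw [hlj] at hl
      rw [← hret] at hl
      rw [Pi.single_apply, if_neg (fun hh => hij hh.symm)] at hl
      exact hl
  refine ⟨M.ret (M.unit h) c j, hj, ?_⟩
  rw [hEq, hind]
  funext k
  simp only [Pi.add_apply, Pi.sub_apply, Pi.neg_apply, Pi.smul_apply, smul_eq_mul,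
    Pi.single_apply]
  by_cases hkj : k = j
  · subst hkj
    rw [if_neg (fun hh => hij hh.symm), if_pos rfl]
    ring
  · rw [hzero k hkj, if_neg hkj]
    ring


lemma nu'_smul_unit (nu' : (M.K → ℝ) → (M.K → ℝ) → Fin m → ℝ) (hext : M.IsNuExtension nu')
    (h : M.K) {b : M.K → ℝ} (hb : M.Pos b) {c : ℝ} (hc : 0 ≤ c) :
    nu' (c • M.unit h) b = c • nu' (M.unit h) b := by
  rcases eq_or_lt_of_le hc with hz | hp
  · rw [← hz, zero_smul, zero_smul]
    exact M.nu'_zero nu' hext hb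
  · exact hext.2.1 (M.unit h) b c (M.nonneg_unit h) hb hp

lemma nu'_sum (hA : M.Anonymous) (hAg : M.Aggregative)
    (nu' : (M.K → ℝ) → (M.K → ℝ) → Fin m → ℝ) (hext : M.IsNuExtension nu')
    {b : M.K → ℝ} (hb : M.Pos b) (s : Finset M.K) (c : M.K → ℝ) (hc : ∀ h, 0 ≤ c h) :
    nu' (∑ h ∈ s, c h • M.unit h) b = ∑ h ∈ s, c h • nu' (M.unit h) b := by
  classical
  induction s using Finset.induction_on with
  | empty => simpa using M.nu'_zero nu' hext hb
  | insert _ _ hns ih =>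
    rename_i h s
    rw [Finset.sum_insert hns, Finset.sum_insert hns]
    have hnn1 : M.Nonneg (c h • M.unit h) := fun h' => by
      have := M.nonneg_unit h h'
      simp only [Pi.smul_apply, smul_eq_mul]
      exact mul_nonneg (hc h) this
    have hnn2 : M.Nonneg (∑ h' ∈ s, c h' • M.unit h') := fun h' => by
      rw [Finset.sum_apply]
      exact Finset.sum_nonneg fun h'' _ => by
        have := M.nonneg_unit h'' h'
        simp only [Pi.smul_apply, smul_eq_mul]
        exact mul_nonneg (hc h'') this
    rw [M.nu'_add hA hAg nu' hext hnn1 hnn2 hb, M.nu'_smul_unit nu' hext h hb (hc h), ih]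

lemma nu'_decomp (hA : M.Anonymous) (hAg : M.Aggregative)
    (nu' : (M.K → ℝ) → (M.K → ℝ) → Fin m → ℝ) (hext : M.IsNuExtension nu')
    {a b : M.K → ℝ} (ha : M.Nonneg a) (hb : M.Pos b) :
    nu' a b = ∑ h, a h • nu' (M.unit h) b := by
  have hrep : a = ∑ h, a h • M.unit h := by
    funext h'
    rw [Finset.sum_apply]
    have : ∀ h ∈ Finset.univ, (a h • M.unit h) h' = if h' = h then a h else 0 := by
      intro h _
      simp only [unit, Pi.smul_apply, smul_eq_mul, Pi.single_apply]
      split <;> simp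
    rw [Finset.sum_congr rfl this, Finset.sum_ite_eq Finset.univ h' a]
    simp
  conv_lhs => rw [hrep]
  exact M.nu'_sum hA hAg nu' hext hb Finset.univ a ha

/-- The directed graph on commodities whose edges are pairs admitting an `ij`-index. -/
def Edge (k l : Fin m) : Prop := k ≠ l ∧ ∃ h, M.IsIJIndex k l h

lemma agg_le_app {a : M.K → ℝ} (ha : M.Nonneg a) (h : M.K) :
    a h ≤ M.agg a (M.ind h) := by
  apply Finset.single_le_sum (fun h' _ => ha h')
  simp

lemma chain_support (hA : M.Anonymous) (hAg : M.Aggregative)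
    (nu' : (M.K → ℝ) → (M.K → ℝ) → Fin m → ℝ) (hext : M.IsNuExtension nu')
    {i : Fin m} {t : ℕ} {f : Fin (t + 1) → Fin m → ℝ}
    (h0 : f 0 = Pi.single i 1)
    (hstep : ∀ k : Fin t, M.Converts nu' (f k.castSucc) (f k.succ)) :
    ∀ n (hn : n < t + 1) l, ¬ Relation.ReflTransGen M.Edge i l → f ⟨n, hn⟩ l ≤ 0 := by
  intro n
  induction n with
  | zero =>
    intro hn l hl
    have hz : (⟨0, hn⟩ : Fin (t + 1)) = 0 := rfl
    rw [hz, h0]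
    have hli : l ≠ i := fun he => hl (he ▸ Relation.ReflTransGen.refl)
    rw [Pi.single_apply, if_neg hli]
  | succ n ih =>
    intro hn l hl
    have hn' : n < t := Nat.lt_of_succ_lt_succ hn
    obtain ⟨a, b, ha, hb, haggle, heq⟩ := hstep ⟨n, hn'⟩
    have hcs : (⟨n, hn'⟩ : Fin t).castSucc = (⟨n, Nat.lt_succ_of_lt hn'⟩ : Fin (t + 1)) := rfl
    have hsc : (⟨n, hn'⟩ : Fin t).succ = (⟨n + 1, hn⟩ : Fin (t + 1)) := rfl
    rw [hcs] at haggle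
    rw [hcs, hsc] at heq
    rw [heq]
    have hIH := ih (Nat.lt_succ_of_lt hn')
    have h1 : f ⟨n, Nat.lt_succ_of_lt hn'⟩ l ≤ 0 := hIH l hl
    have h2 : nu' a b l ≤ 0 := by
      rw [M.nu'_decomp hA hAg nu' hext ha hb]
      rw [Finset.sum_apply]
      apply Finset.sum_nonpos
      intro h _
      rcases eq_or_lt_of_le (ha h) with hz | hp
      · simp [← hz]
      · have hreach : Relation.ReflTransGen M.Edge i (M.ind h) := by
          by_contra hnr
          have hfle := hIH (M.ind h) hnr
          have h3 : a h ≤ M.agg a (M.ind h) := M.agg_le_app ha h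
          have h4 : M.agg a (M.ind h) ≤ f ⟨n, Nat.lt_succ_of_lt hn'⟩ (M.ind h) := haggle _
          linarith
        have hlne : l ≠ M.ind h := fun he => hl (he ▸ hreach)
        have hno : ¬ M.IsIJIndex (M.ind h) l h := fun hidx =>
          hl (hreach.tail ⟨fun he => hlne he.symm, h, hidx⟩)
        have h5 := M.nu'_unit_nonpos nu' hext h hb l hlne hno
        simp only [Pi.smul_apply, smul_eq_mul]
        exact mul_nonpos_of_nonneg_of_nonpos (le_of_lt hp) h5
    simp only [Pi.add_apply]
    linarith


lemma reach_of_chain (hA : M.Anonymous) (hAg : M.Aggregative)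
    (nu' : (M.K → ℝ) → (M.K → ℝ) → Fin m → ℝ) (hext : M.IsNuExtension nu')
    {i j : Fin m} {t : ℕ} (hc : M.ConvertsIn nu' t (Pi.single i 1) (Pi.single j 1)) :
    Relation.ReflTransGen M.Edge i j := by
  obtain ⟨f, h0, hlast, hstep⟩ := hc
  by_contra hnr
  have := M.chain_support hA hAg nu' hext h0 hstep t (Nat.lt_succ_self t) j hnr
  have hlt : (⟨t, Nat.lt_succ_self t⟩ : Fin (t + 1)) = Fin.last t := rfl
  rw [hlt, hlast, Pi.single_apply, if_pos rfl] at this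
  linarith

lemma edge_pure (hF : M.Flexible) {P : Set M.K} (hP : M.IsPureSelection P)
    {k l : Fin m} (he : M.Edge k l) : ∃ h, h ∈ P ∧ M.IsPureIJIndex k l h := by
  obtain ⟨hne, hex⟩ := he
  obtain ⟨h, hp⟩ := hF k l hex
  obtain ⟨h', hh', -⟩ := hP.2 k l ⟨h, hp⟩
  exact ⟨h', hh'.1, hh'.2⟩

lemma spoffer_unit {P : Set M.K} {h : M.K} (hh : h ∈ P) {t : ℝ} (ht : 0 ≤ t) :
    M.SPoffer P (t • M.unit h) := by
  refine ⟨fun h' => ?_, fun h' hh' => ?_⟩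
  · simp only [Pi.smul_apply, smul_eq_mul]
    exact mul_nonneg ht (M.nonneg_unit h h')
  · have hne : h' ≠ h := fun he => hh' (he ▸ hh)
    simp only [Pi.smul_apply, smul_eq_mul, unit, Pi.single_apply, if_neg hne, mul_zero]

lemma spoffer_add {P : Set M.K} {a1 a2 : M.K → ℝ} (h1 : M.SPoffer P a1)
    (h2 : M.SPoffer P a2) : M.SPoffer P (a1 + a2) :=
  ⟨fun h => add_nonneg (h1.1 h) (h2.1 h),
    fun h hh => by simp only [Pi.add_apply, h1.2 h hh, h2.2 h hh, add_zero]⟩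

lemma reach_offer (hA : M.Anonymous) (hAg : M.Aggregative) (hND : M.NonDissipative)
    (hF : M.Flexible)
    (nu' : (M.K → ℝ) → (M.K → ℝ) → Fin m → ℝ) (hext : M.IsNuExtension nu')
    {P : Set M.K} (hP : M.IsPureSelection P) {b : M.K → ℝ} (hb : M.Pos b)
    {i j : Fin m} (hr : Relation.ReflTransGen M.Edge i j) :
    i = j ∨ ∃ a, M.SPoffer P a ∧ ∃ s t : ℝ, 0 < s ∧ 0 < t ∧
      nu' a b = (-s) • (Pi.single i 1 : Fin m → ℝ) + t • (Pi.single j 1 : Fin m → ℝ) := by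
  induction hr with
  | refl => exact Or.inl rfl
  | @tail k j hik hkj ih =>
    right
    obtain ⟨h, hhP, hpure⟩ := M.edge_pure hF hP hkj
    obtain ⟨u, hu, hnuu⟩ := M.nu'_pure hND nu' hext hkj.1 hpure hb
    rcases ih with rfl | ⟨a, hSP, s, t, hs, ht, hnu⟩
    · refine ⟨(1:ℝ) • M.unit h, M.spoffer_unit hhP zero_le_one, 1, u, one_pos, hu, ?_⟩
      rw [one_smul, hnuu]
      funext l
      simp only [Pi.add_apply, Pi.neg_apply, Pi.smul_apply, smul_eq_mul]
      ring
    · refine ⟨a + t • M.unit h, M.spoffer_add hSP (M.spoffer_unit hhP (le_of_lt ht)),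
        s, t * u, hs, mul_pos ht hu, ?_⟩
      have hnn : M.Nonneg (t • M.unit h) := (M.spoffer_unit hhP (le_of_lt ht)).1
      rw [M.nu'_add hA hAg nu' hext hSP.1 hnn hb,
        M.nu'_smul_unit nu' hext h hb (le_of_lt ht), hnu, hnuu]
      funext l
      simp only [Pi.add_apply, Pi.neg_apply, Pi.smul_apply, smul_eq_mul]
      ring

end ExchangeMechanism

/-- Convertibility.  Let `M ∈ 𝔐(m)`.  For every `b ∈ S₊` and every pair
of distinct commodities `i ≠ j`, there exists an offer `a ∈ S_P` such that `ν(a,b)` is an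
`īj`-vector, i.e. `ν(a,b) = −s·e_i + t·e_j` for some reals `s,t > 0` (all other components
zero). -/
theorem convertibility {m : ℕ} (M : ExchangeMechanism m)
    (nu' : (M.K → ℝ) → (M.K → ℝ) → Fin m → ℝ) (hM : M.MemM nu')
    (P : Set M.K) (hP : M.IsPureSelection P) :
    ∀ b, M.Pos b → ∀ i j : Fin m, i ≠ j →
      ∃ a, M.SPoffer P a ∧ ∃ s t : ℝ, 0 < s ∧ 0 < t ∧
        nu' a b = (-s) • (Pi.single i 1 : Fin m → ℝ) + t • (Pi.single j 1 : Fin m → ℝ) := by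
  obtain ⟨hC, hA, hAg, hI, hND, hF, hext, hconn⟩ := hM
  intro b hb i j hij
  obtain ⟨t, hc⟩ := hconn i j hij
  have hr := M.reach_of_chain hA hAg nu' hext hc
  rcases M.reach_offer hA hAg hND hF nu' hext hP hb hr with heq | hres
  · exact absurd heq hij
  · exact hres
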